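/- Let q_1 : ℝ → ℝ be smooth with q_1''(x) > 0 for all x, and define q_3 = (2 q_1'')^{−1/2} and q_2 = ½ (5 (q_1''')² − 4 q_1'' q_1'''') (2 q_1'')^{−7/2}. Let L : {(u,v) ∈ ℝ³×ℝ³ : u_3 ≠ 0} → ℝ be the Lagrangian L(q, q_x) = ¼ q_{1,x}² − q_{2,x} q_{3,x}/(2 q_3) + q_{3,x}² q_2/(4 q_3²) + q_1/(4 q_3²) − q_2²/(4 q_3³) (this is the Stäckel Lagrangian L^{3,2,−3} with ε = −1). Then the curve q = (q_1, q_2, q_3) satisfies the Euler–Lagrange equations E_1(L)[q] = 0 and E_2(L)[q] = 0 identically, where E_i(L)[q](x) = (∂L/∂q_i)(q(x), q_x(x)) − (d/dx)[(∂L/∂q_{i,x})(q(x), q_x(x))]. Moreover, for an arbitrary smooth curve q : ℝ → ℝ³ with q_3 nonvanishing, E_1(L)[q] = 1/(4 q_3²) − ½ q_{1,xx} and E_2(L)[q] = −q_2/(2 q_3³) − q_{3,x}²/(4 q_3²) + q_{3,xx}/(2 q_3). -/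

import Mathlib

noncomputable section

/-- Euler–Lagrange expression `E_i(L)[c](x) = (∂L/∂q_i)(c x, c_x x) - d/dx [(∂L/∂q_{i,x})(c x, c_x x)]`
along a curve `c : ℝ → ℝⁿ`. -/
def EL (n : ℕ) (L : (Fin n → ℝ) → (Fin n → ℝ) → ℝ) (c : ℝ → Fin n → ℝ) (i : Fin n)
    (x : ℝ) : ℝ :=
  fderiv ℝ (fun Q => L Q (deriv c x)) (c x) (Pi.single i 1) -
    deriv (fun y => fderiv ℝ (fun V => L (c y) V) (deriv c y) (Pi.single i 1)) x

/-- The Stäckel Lagrangian `L^{3,2,-3}` with `ε = -1`, written out explicitly. -/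
def L19 (Q V : Fin 3 → ℝ) : ℝ :=
  (1 / 4) * V 0 ^ 2 - V 1 * V 2 / (2 * Q 2) + V 2 ^ 2 * Q 1 / (4 * Q 2 ^ 2) +
    Q 0 / (4 * Q 2 ^ 2) - Q 1 ^ 2 / (4 * Q 2 ^ 3)


lemma fderiv_dir {F : (Fin 3 → ℝ) → ℝ} {p w : Fin 3 → ℝ} (hF : DifferentiableAt ℝ F p) :
    fderiv ℝ F p w = deriv (fun t : ℝ => F (p + t • w)) 0 := by
  have hline : HasDerivAt (fun t : ℝ => p + t • w) w 0 := by
    simpa using ((hasDerivAt_id (0:ℝ)).smul_const w).const_add p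
  exact (hF.hasFDerivAt.comp_hasDerivAt_of_eq 0 hline (by simp)).deriv.symm

lemma diffQ (v p : Fin 3 → ℝ) (hp : p 2 ≠ 0) : DifferentiableAt ℝ (fun Q => L19 Q v) p := by
  unfold L19
  simp only [div_eq_mul_inv]
  fun_prop (disch := simp [hp, pow_eq_zero_iff])

lemma diffV (p v : Fin 3 → ℝ) : DifferentiableAt ℝ (fun V => L19 p V) v := by
  unfold L19
  simp only [div_eq_mul_inv]
  fun_prop

lemma deriv_quad (K m r : ℝ) : deriv (fun t : ℝ => K + t * m + t ^ 2 * r) 0 = m := by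
  have h := (((hasDerivAt_id (0:ℝ)).mul_const m).const_add K).add
    ((hasDerivAt_pow 2 (0:ℝ)).mul_const r)
  exact (h.congr_deriv (by simp)).deriv

lemma pQ0 (p v : Fin 3 → ℝ) (hp : p 2 ≠ 0) :
    fderiv ℝ (fun Q => L19 Q v) p (Pi.single (0 : Fin 3) 1) = 1 / (4 * p 2 ^ 2) := by
  rw [fderiv_dir (diffQ v p hp)]
  have hfun : (fun t : ℝ => L19 (p + t • (Pi.single (0 : Fin 3) (1:ℝ) : Fin 3 → ℝ)) v) = fun t : ℝ =>
      ((1/4) * v 0 ^ 2 - v 1 * v 2 / (2 * p 2) + v 2 ^ 2 * p 1 / (4 * p 2 ^ 2) +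
        p 0 / (4 * p 2 ^ 2) - p 1 ^ 2 / (4 * p 2 ^ 3)) + t * (1 / (4 * p 2 ^ 2)) + t ^ 2 * 0 := by
    funext t
    simp [L19, Pi.single_apply]
    ring
  rw [hfun, deriv_quad]

lemma pQ1 (p v : Fin 3 → ℝ) (hp : p 2 ≠ 0) :
    fderiv ℝ (fun Q => L19 Q v) p (Pi.single (1 : Fin 3) 1) =
      v 2 ^ 2 / (4 * p 2 ^ 2) - p 1 / (2 * p 2 ^ 3) := by
  rw [fderiv_dir (diffQ v p hp)]
  have hfun : (fun t : ℝ => L19 (p + t • (Pi.single (1 : Fin 3) (1:ℝ) : Fin 3 → ℝ)) v) = fun t : ℝ =>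
      ((1/4) * v 0 ^ 2 - v 1 * v 2 / (2 * p 2) + v 2 ^ 2 * p 1 / (4 * p 2 ^ 2) +
        p 0 / (4 * p 2 ^ 2) - p 1 ^ 2 / (4 * p 2 ^ 3)) +
        t * (v 2 ^ 2 / (4 * p 2 ^ 2) - p 1 / (2 * p 2 ^ 3)) + t ^ 2 * (-(1 / (4 * p 2 ^ 3))) := by
    funext t
    simp [L19, Pi.single_apply]
    ring
  rw [hfun, deriv_quad]

lemma pV0 (p v : Fin 3 → ℝ) :
    fderiv ℝ (fun V => L19 p V) v (Pi.single (0 : Fin 3) 1) = (1/2) * v 0 := by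
  rw [fderiv_dir (diffV p v)]
  have hfun : (fun t : ℝ => L19 p (v + t • (Pi.single (0 : Fin 3) (1:ℝ) : Fin 3 → ℝ))) = fun t : ℝ =>
      ((1/4) * v 0 ^ 2 - v 1 * v 2 / (2 * p 2) + v 2 ^ 2 * p 1 / (4 * p 2 ^ 2) +
        p 0 / (4 * p 2 ^ 2) - p 1 ^ 2 / (4 * p 2 ^ 3)) + t * ((1/2) * v 0) + t ^ 2 * (1/4) := by
    funext t
    simp [L19, Pi.single_apply]
    ring
  rw [hfun, deriv_quad]

lemma pV1 (p v : Fin 3 → ℝ) :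
    fderiv ℝ (fun V => L19 p V) v (Pi.single (1 : Fin 3) 1) = -(v 2 / (2 * p 2)) := by
  rw [fderiv_dir (diffV p v)]
  have hfun : (fun t : ℝ => L19 p (v + t • (Pi.single (1 : Fin 3) (1:ℝ) : Fin 3 → ℝ))) = fun t : ℝ =>
      ((1/4) * v 0 ^ 2 - v 1 * v 2 / (2 * p 2) + v 2 ^ 2 * p 1 / (4 * p 2 ^ 2) +
        p 0 / (4 * p 2 ^ 2) - p 1 ^ 2 / (4 * p 2 ^ 3)) + t * (-(v 2 / (2 * p 2))) + t ^ 2 * 0 := by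
    funext t
    simp [L19, Pi.single_apply]
    ring
  rw [hfun, deriv_quad]

lemma deriv_coord (q : ℝ → Fin 3 → ℝ) (hq : ContDiff ℝ (⊤ : ℕ∞) q) (i : Fin 3) (y : ℝ) :
    deriv q y i = deriv (fun t => q t i) y := by
  have h : HasDerivAt q (deriv q y) y := (hq.differentiable (by norm_num) y).hasDerivAt
  exact ((hasDerivAt_pi.1 h) i).deriv.symm

lemma part2 (q : ℝ → Fin 3 → ℝ) (hq : ContDiff ℝ (⊤ : ℕ∞) q) (hne : ∀ x, q x 2 ≠ 0) (x : ℝ) :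
    EL 3 L19 q 0 x = 1 / (4 * q x 2 ^ 2) - (1 / 2) * deriv (deriv fun y => q y 0) x ∧
      EL 3 L19 q 1 x = -q x 1 / (2 * q x 2 ^ 3) -
        (deriv (fun y => q y 2) x) ^ 2 / (4 * q x 2 ^ 2) +
        deriv (deriv fun y => q y 2) x / (2 * q x 2) := by
  have hqi : ∀ i : Fin 3, ContDiff ℝ (⊤ : ℕ∞) (fun t => q t i) := fun i => contDiff_pi.1 hq i
  have hdi : ∀ i : Fin 3, ContDiff ℝ (⊤ : ℕ∞) (deriv (fun t => q t i)) := fun i =>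
    (contDiff_infty_iff_deriv.1 (hqi i)).2
  have hco := deriv_coord q hq
  constructor
  · unfold EL
    rw [pQ0 _ _ (hne x)]
    have h1 : (fun y => fderiv ℝ (fun V => L19 (q y) V) (deriv q y) (Pi.single (0:Fin 3) 1)) =
        fun y => (1/2) * deriv (fun t => q t 0) y := by
      funext y; rw [pV0, hco 0 y]
    rw [h1, deriv_const_mul _ (((hdi 0).differentiable (by norm_num)) x)]
  · unfold EL
    rw [pQ1 _ _ (hne x)]
    have h1 : (fun y => fderiv ℝ (fun V => L19 (q y) V) (deriv q y) (Pi.single (1:Fin 3) 1)) =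
        fun y => -(deriv (fun t => q t 2) y) / (2 * q y 2) := by
      funext y; rw [pV1, hco 2 y]; ring
    rw [h1]
    have hnum : HasDerivAt (fun y => -(deriv (fun t => q t 2) y))
        (-(deriv (deriv fun t => q t 2) x)) x :=
      ((((hdi 2).differentiable (by norm_num)) x).hasDerivAt).neg
    have hden : HasDerivAt (fun y => 2 * q y 2) (2 * deriv (fun t => q t 2) x) x :=
      ((((hqi 2).differentiable (by norm_num)) x).hasDerivAt).const_mul 2
    have hdiv := hnum.div hden (by simp [hne x])
    rw [(show deriv (fun y => -(deriv (fun t => q t 2) y) / (2 * q y 2)) x = _ from hdiv.deriv), hco 2 x]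
    have hq2 := hne x
    field_simp
    ring

theorem local_HD_elimination (q1 : ℝ → ℝ) (hq1 : ContDiff ℝ (⊤ : ℕ∞) q1)
    (hpos : ∀ x, 0 < deriv (deriv q1) x) (q2 q3 : ℝ → ℝ)
    (hq3 : ∀ x, q3 x = (2 * deriv (deriv q1) x) ^ (-(1 / 2) : ℝ))
    (hq2 : ∀ x, q2 x = (1 / 2) *
      (5 * (deriv (deriv (deriv q1)) x) ^ 2 -
        4 * deriv (deriv q1) x * deriv (deriv (deriv (deriv q1))) x) *
      (2 * deriv (deriv q1) x) ^ (-(7 / 2) : ℝ)) :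
    ((∀ x : ℝ, EL 3 L19 (fun y => ![q1 y, q2 y, q3 y]) 0 x = 0) ∧
      (∀ x : ℝ, EL 3 L19 (fun y => ![q1 y, q2 y, q3 y]) 1 x = 0)) ∧
    (∀ q : ℝ → Fin 3 → ℝ, ContDiff ℝ (⊤ : ℕ∞) q → (∀ x, q x 2 ≠ 0) → ∀ x : ℝ,
      EL 3 L19 q 0 x = 1 / (4 * q x 2 ^ 2) - (1 / 2) * deriv (deriv fun y => q y 0) x ∧
      EL 3 L19 q 1 x = -q x 1 / (2 * q x 2 ^ 3) -
        (deriv (fun y => q y 2) x) ^ 2 / (4 * q x 2 ^ 2) +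
        deriv (deriv fun y => q y 2) x / (2 * q x 2)) := by
  have hu : ContDiff ℝ (⊤:ℕ∞) (deriv (deriv q1)) :=
    (contDiff_infty_iff_deriv.1 (contDiff_infty_iff_deriv.1 hq1).2).2
  have hu' : ContDiff ℝ (⊤:ℕ∞) (deriv (deriv (deriv q1))) := (contDiff_infty_iff_deriv.1 hu).2
  have hu'' : ContDiff ℝ (⊤:ℕ∞) (deriv (deriv (deriv (deriv q1)))) :=
    (contDiff_infty_iff_deriv.1 hu').2
  have hs : ∀ x, (0:ℝ) < 2 * deriv (deriv q1) x := fun x => by linarith [hpos x]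
  have hsne : ∀ x, 2 * deriv (deriv q1) x ≠ 0 := fun x => (hs x).ne'
  have hq3fun : q3 = fun x => (2 * deriv (deriv q1) x) ^ (-(1/2) : ℝ) := funext hq3
  have hq2fun : q2 = fun x => (1 / 2) *
      (5 * (deriv (deriv (deriv q1)) x) ^ 2 -
        4 * deriv (deriv q1) x * deriv (deriv (deriv (deriv q1))) x) *
      (2 * deriv (deriv q1) x) ^ (-(7 / 2) : ℝ) := funext hq2
  have hbase : ∀ y, HasDerivAt (fun z => 2 * deriv (deriv q1) z)
      (2 * deriv (deriv (deriv q1)) y) y := fun y =>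
    (((hu.differentiable (by norm_num)) y).hasDerivAt).const_mul 2
  have hq3c : ContDiff ℝ (⊤:ℕ∞) q3 := by
    rw [hq3fun, contDiff_iff_contDiffAt]
    intro x
    exact ((contDiff_const.mul hu).contDiffAt).rpow_const_of_ne (hsne x)
  have hq2c : ContDiff ℝ (⊤:ℕ∞) q2 := by
    rw [hq2fun, contDiff_iff_contDiffAt]
    intro x
    have h1 : ContDiffAt ℝ (⊤:ℕ∞) (fun x => (2 * deriv (deriv q1) x) ^ (-(7/2):ℝ)) x :=
      ((contDiff_const.mul hu).contDiffAt).rpow_const_of_ne (hsne x)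
    exact ((contDiff_const.mul ((contDiff_const.mul (hu'.pow 2)).sub
      ((contDiff_const.mul hu).mul hu''))).contDiffAt).mul h1
  have hqc : ContDiff ℝ (⊤:ℕ∞) (fun y => ![q1 y, q2 y, q3 y]) := by
    rw [contDiff_pi]
    intro i
    fin_cases i
    · simpa using hq1
    · simpa using hq2c
    · simpa using hq3c
  have hne : ∀ x, (fun y => ![q1 y, q2 y, q3 y]) x 2 ≠ 0 := fun x => by
    simp only [Matrix.cons_val_two, Matrix.tail_cons, Matrix.head_cons]
    rw [hq3 x]
    exact (Real.rpow_pos_of_pos (hs x) _).ne'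
  -- first derivative of q3
  have hq3d : ∀ y, HasDerivAt q3
      (-(1/2) * ((2 * deriv (deriv q1) y) ^ ((-(1/2):ℝ) - 1) *
        (2 * deriv (deriv (deriv q1)) y))) y := by
    intro y
    rw [hq3fun]
    have hr := Real.hasDerivAt_rpow_const (p := (-(1/2):ℝ)) (Or.inl (hsne y))
    have := hr.comp y (hbase y)
    simpa [Function.comp_def, mul_assoc] using this
  have hq3d1 : deriv q3 = fun y => -(1/2) * ((2 * deriv (deriv q1) y) ^ ((-(1/2):ℝ) - 1) *
      (2 * deriv (deriv (deriv q1)) y)) := funext fun y => (hq3d y).deriv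
  have key := part2 (fun y => ![q1 y, q2 y, q3 y]) hqc hne
  refine ⟨⟨fun x => ?_, fun x => ?_⟩, fun q hq hn x => part2 q hq hn x⟩
  · have h := (key x).1
    simp only [Matrix.cons_val_zero, Matrix.cons_val_two, Matrix.tail_cons,
      Matrix.head_cons] at h
    rw [h, hq3 x]
    have h2 : ((2 * deriv (deriv q1) x : ℝ) ^ (-(1/2):ℝ)) ^ (2:ℕ) =
        (2 * deriv (deriv q1) x)⁻¹ := by
      rw [← Real.rpow_natCast _ 2, ← Real.rpow_mul (hs x).le]
      norm_num
      rw [Real.rpow_neg_one, mul_inv]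
      ring
    rw [h2]
    have := hsne x
    field_simp
    ring
  · have h := (key x).2
    simp only [Matrix.cons_val_zero, Matrix.cons_val_one, Matrix.cons_val_two,
      Matrix.tail_cons, Matrix.head_cons] at h
    -- second derivative of q3 at x
    have hf1 : HasDerivAt (fun y => (2 * deriv (deriv q1) y) ^ ((-(1/2):ℝ) - 1))
        (((-(1/2):ℝ) - 1) * ((2 * deriv (deriv q1) x) ^ ((-(1/2):ℝ) - 1 - 1) *
          (2 * deriv (deriv (deriv q1)) x))) x := by
      have hr := Real.hasDerivAt_rpow_const (p := ((-(1/2):ℝ) - 1)) (Or.inl (hsne x))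
      have := hr.comp x (hbase x)
      simpa [Function.comp_def, mul_assoc] using this
    have hf2 : HasDerivAt (fun y => 2 * deriv (deriv (deriv q1)) y)
        (2 * deriv (deriv (deriv (deriv q1))) x) x :=
      (((hu'.differentiable (by norm_num)) x).hasDerivAt).const_mul 2
    have h2nd := ((hf1.mul hf2).const_mul (-(1/2) : ℝ))
    rw [hq3d1] at h
    rw [h, (show deriv (fun y => -(1/2) * ((2 * deriv (deriv q1) y) ^ ((-(1/2):ℝ) - 1) *
        (2 * deriv (deriv (deriv q1)) y))) x = _ from h2nd.deriv), hq2 x, hq3 x]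
    beta_reduce
    have hApow : ∀ (k : ℕ) (c : ℝ), (-(1/2):ℝ) * k = c →
        ((2 * deriv (deriv q1) x) ^ (-(1/2):ℝ)) ^ k = (2 * deriv (deriv q1) x) ^ c :=
      fun k c hc => by rw [← Real.rpow_natCast _ k, ← Real.rpow_mul (hs x).le, hc]
    have e3 : (2 * deriv (deriv q1) x) ^ ((-(1/2):ℝ) - 1) =
        ((2 * deriv (deriv q1) x) ^ (-(1/2):ℝ)) ^ 3 := (hApow 3 (-(1/2)-1) (by norm_num)).symm
    have e5 : (2 * deriv (deriv q1) x) ^ ((-(1/2):ℝ) - 1 - 1) =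
        ((2 * deriv (deriv q1) x) ^ (-(1/2):ℝ)) ^ 5 := (hApow 5 (-(1/2)-1-1) (by norm_num)).symm
    have e7 : (2 * deriv (deriv q1) x) ^ ((-(7/2)):ℝ) =
        ((2 * deriv (deriv q1) x) ^ (-(1/2):ℝ)) ^ 7 := (hApow 7 (-(7/2)) (by norm_num)).symm
    rw [e5, e3, e7]
    have hA2 : ((2 * deriv (deriv q1) x) ^ (-(1/2):ℝ)) ^ 2 * (2 * deriv (deriv q1) x) = 1 := by
      rw [hApow 2 (-1) (by norm_num), Real.rpow_neg_one]
      exact inv_mul_cancel₀ (hsne x)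
    have hAne : (2 * deriv (deriv q1) x) ^ (-(1/2):ℝ) ≠ 0 :=
      (Real.rpow_pos_of_pos (hs x) _).ne'
    set A := (2 * deriv (deriv q1) x) ^ (-(1/2):ℝ) with hA
    field_simp
    linear_combination (8 * A ^ 2 * deriv (deriv (deriv (deriv q1))) x) * hA2
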